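/- Let f be C² near the origin in ℝ² with an isolated equi-diagonal point of its Hessian at the origin (i.e. on a punctured neighborhood, (f_{xx}, f_{xy}, f_{yy}) never satisfies f_{xx} = f_{yy} and f_{xy} = 0 simultaneously). Then for g = f, viewed as g(z, z̄) with z = x+iy, one has g_{zz} = (1/4)((g_{xx} − g_{yy}) − 2 i g_{xy}), and the index at the origin of the eigen-flow of the Hessian matrix of g equals −(1/2)·ind₀(g_{zz}), where g_{zz} is regarded as a complex-valued nonvanishing function on the punctured neighborhood and ind₀ denotes its winding number around 0 along a small circle. -/

import Mathlib

open Real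

/-- The Wirtinger derivative `∂/∂z = (1/2)(∂/∂x - i ∂/∂y)` of a complex-valued function
of two real variables. -/
noncomputable def DzH (u : ℝ → ℝ → ℂ) (x y : ℝ) : ℂ :=
  (1 / 2) * (deriv (fun t => u t y) x - Complex.I * deriv (fun t => u x t) y)

noncomputable def gxxH (g : ℝ → ℝ → ℝ) (x y : ℝ) : ℝ :=
  deriv (fun t => deriv (fun s => g s y) t) x
noncomputable def gyyH (g : ℝ → ℝ → ℝ) (x y : ℝ) : ℝ :=
  deriv (fun t => deriv (fun s => g x s) t) y
noncomputable def gxyH (g : ℝ → ℝ → ℝ) (x y : ℝ) : ℝ :=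
  deriv (fun t => deriv (fun s => g s t) x) y

/-- `g_{zz} = (1/4)((g_{xx} - g_{yy}) - 2i g_{xy})`. -/
noncomputable def gzzH (g : ℝ → ℝ → ℝ) (x y : ℝ) : ℂ :=
  (1 / 4) * (((gxxH g x y - gyyH g x y : ℝ) : ℂ)
    - 2 * Complex.I * ((gxyH g x y : ℝ) : ℂ))

/-- The vector field `d_g = 2 g_{xy} ∂_x + (g_{yy} - g_{xx}) ∂_y` identifying the
eigen-flow of the Hessian of `g`. -/
noncomputable def dgH (g : ℝ → ℝ → ℝ) (x y : ℝ) : ℝ × ℝ :=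
  (2 * gxyH g x y, gyyH g x y - gxxH g x y)

private lemma winding_aux (α β : ℝ → ℝ) (hα : Continuous α) (hβ : Continuous β)
    (h : ∀ t : ℝ, ∃ n : ℤ, α t + β t + π / 2 = 2 * π * n) :
    α (2 * π) - α 0 = -(β (2 * π) - β 0) := by
  have hπ := Real.pi_pos
  have hc : Continuous (fun t => α t + β t + π / 2) := by continuity
  suffices hs : α (2 * π) + β (2 * π) + π / 2 = α 0 + β 0 + π / 2 by linarith
  obtain ⟨n0, hn0⟩ := h 0
  obtain ⟨n1, hn1⟩ := h (2 * π)
  have key : ∀ m0 m1 : ℤ, m0 < m1 → ¬ ((2 * π * m0 + π) ∈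
      Set.Icc (2 * π * m0) (2 * π * m1) → False) → True := fun _ _ _ _ => trivial
  rcases lt_trichotomy n0 n1 with hlt | heq | hlt
  · exfalso
    have h1 : α 0 + β 0 + π / 2 ≤ 2 * π * n0 + π := by rw [hn0]; linarith
    have h2 : 2 * π * n0 + π ≤ α (2 * π) + β (2 * π) + π / 2 := by
      rw [hn1]
      have : (n0 : ℝ) + 1 ≤ n1 := by exact_mod_cast hlt
      nlinarith
    obtain ⟨t, -, ht⟩ := intermediate_value_Icc (by positivity : (0:ℝ) ≤ 2 * π)
      hc.continuousOn ⟨h1, h2⟩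
    obtain ⟨k, hk⟩ := h t
    replace ht : α t + β t + π / 2 = _ := ht
    rw [ht] at hk
    have h3 : ((2 * k - 2 * n0 - 1 : ℤ) : ℝ) * π = 0 := by push_cast; linarith
    have h4 : (2 * k - 2 * n0 - 1 : ℤ) = 0 := by
      exact_mod_cast mul_eq_zero.1 h3 |>.resolve_right hπ.ne'
    omega
  · rw [hn0, hn1, heq]
  · exfalso
    have h1 : α (2 * π) + β (2 * π) + π / 2 ≤ 2 * π * n1 + π := by rw [hn1]; linarith
    have h2 : 2 * π * n1 + π ≤ α 0 + β 0 + π / 2 := by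
      rw [hn0]
      have : (n1 : ℝ) + 1 ≤ n0 := by exact_mod_cast hlt
      nlinarith
    obtain ⟨t, -, ht⟩ := intermediate_value_Icc' (by positivity : (0:ℝ) ≤ 2 * π)
      hc.continuousOn ⟨h1, h2⟩
    obtain ⟨k, hk⟩ := h t
    replace ht : α t + β t + π / 2 = _ := ht
    rw [ht] at hk
    have h3 : ((2 * k - 2 * n1 - 1 : ℤ) : ℝ) * π = 0 := by push_cast; linarith
    have h4 : (2 * k - 2 * n1 - 1 : ℤ) = 0 := by
      exact_mod_cast mul_eq_zero.1 h3 |>.resolve_right hπ.ne'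
    omega


private lemma angle_step (A B a b : ℝ) (hAB : ¬(A = 0 ∧ B = 0))
    (h1 : 2 * B = Real.sqrt ((2 * B) ^ 2 + (-A) ^ 2) * Real.cos a)
    (h2 : -A = Real.sqrt ((2 * B) ^ 2 + (-A) ^ 2) * Real.sin a)
    (hz : (1 / 4 : ℂ) * ((A : ℂ) - 2 * Complex.I * (B : ℂ))
        = (‖(1 / 4 : ℂ) * ((A : ℂ) - 2 * Complex.I * (B : ℂ))‖ : ℂ)
          * Complex.exp ((b : ℂ) * Complex.I)) :
    ∃ n : ℤ, a + b + π / 2 = 2 * π * n := by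
  set ρ := Real.sqrt ((2 * B) ^ 2 + (-A) ^ 2) with hρ
  have hρpos : 0 < ρ := by
    apply Real.sqrt_pos.2
    rcases not_and_or.1 hAB with h | h
    · have : A ^ 2 > 0 := by positivity
      nlinarith
    · have : B ^ 2 > 0 := by positivity
      nlinarith
  set z : ℂ := (1 / 4 : ℂ) * ((A : ℂ) - 2 * Complex.I * (B : ℂ)) with hzdef
  have hre : z.re = A / 4 := by simp [hzdef]; ring
  have him : z.im = -(B / 2) := by simp [hzdef]; ring
  have habs : ‖z‖ = ρ / 4 := by
    rw [Complex.norm_def, Complex.normSq_apply, hre, him, hρ,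
      show (2 * B) ^ 2 + (-A) ^ 2 = 16 * (A / 4 * (A / 4) + -(B / 2) * -(B / 2)) by ring,
      Real.sqrt_mul (by norm_num : (0:ℝ) ≤ 16),
      show Real.sqrt 16 = 4 by
        rw [show (16:ℝ) = 4 ^ 2 by norm_num, Real.sqrt_sq (by norm_num : (0:ℝ) ≤ 4)]]
    ring
  have h3 := congrArg Complex.re hz
  have h4 := congrArg Complex.im hz
  simp only [Complex.re_ofReal_mul, Complex.im_ofReal_mul, Complex.exp_ofReal_mul_I_re,
    Complex.exp_ofReal_mul_I_im, hre, him, habs] at h3 h4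
  have e1 : ρ * Real.cos b = ρ * (-Real.sin a) := by linear_combination (-4) * h3 - h2
  have e2 : ρ * Real.sin b = ρ * (-Real.cos a) := by linear_combination (-4) * h4 - h1
  have hcb := mul_left_cancel₀ hρpos.ne' e1
  have hsb := mul_left_cancel₀ hρpos.ne' e2
  have hexp : Complex.exp ((b : ℂ) * Complex.I)
      = Complex.exp (((-a - π / 2 : ℝ) : ℂ) * Complex.I) := by
    apply Complex.ext
    · rw [Complex.exp_ofReal_mul_I_re, Complex.exp_ofReal_mul_I_re, hcb,
        show -a - π / 2 = -(a + π / 2) by ring, Real.cos_neg, Real.cos_add_pi_div_two]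
    · rw [Complex.exp_ofReal_mul_I_im, Complex.exp_ofReal_mul_I_im, hsb,
        show -a - π / 2 = -(a + π / 2) by ring, Real.sin_neg, Real.sin_add_pi_div_two]
  obtain ⟨n, hn⟩ := Complex.exp_eq_exp_iff_exists_int.1 hexp
  refine ⟨n, ?_⟩
  have him2 := congrArg Complex.im hn
  simp [Complex.add_im, Complex.mul_im, Complex.mul_re] at him2
  linarith

private lemma dzz_eq (g : ℝ → ℝ → ℝ) (ε : ℝ)
    (hg : ContDiffOn ℝ 2 (fun p : ℝ × ℝ => g p.1 p.2) (Metric.ball 0 ε))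
    (x y : ℝ) (hp : ((x, y) : ℝ × ℝ) ∈ Metric.ball (0 : ℝ × ℝ) ε) :
    DzH (DzH (fun s t => (g s t : ℂ))) x y = gzzH g x y := by
  set F : ℝ × ℝ → ℝ := fun p => g p.1 p.2 with hFdef
  have hopen : IsOpen (Metric.ball (0 : ℝ × ℝ) ε) := Metric.isOpen_ball
  have hnhds : Metric.ball (0 : ℝ × ℝ) ε ∈ nhds ((x, y) : ℝ × ℝ) := hopen.mem_nhds hp
  have hFd : ∀ q ∈ Metric.ball (0 : ℝ × ℝ) ε, HasFDerivAt F (fderiv ℝ F q) q := fun q hq =>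
    ((hg.contDiffAt (hopen.mem_nhds hq)).differentiableAt (by norm_num)).hasFDerivAt
  have hax : ∀ q ∈ Metric.ball (0 : ℝ × ℝ) ε,
      HasDerivAt (fun t => g t q.2) (fderiv ℝ F q (1, 0)) q.1 := by
    intro q hq
    have hcurve : HasDerivAt (fun t : ℝ => ((t, q.2) : ℝ × ℝ)) ((1 : ℝ), (0 : ℝ)) q.1 :=
      (hasDerivAt_id q.1).prodMk (hasDerivAt_const q.1 q.2)
    exact HasFDerivAt.comp_hasDerivAt (x := q.1) (hf := hcurve) (hl := hFd q hq)
  have hay : ∀ q ∈ Metric.ball (0 : ℝ × ℝ) ε,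
      HasDerivAt (fun t => g q.1 t) (fderiv ℝ F q (0, 1)) q.2 := by
    intro q hq
    have hcurve : HasDerivAt (fun t : ℝ => ((q.1, t) : ℝ × ℝ)) ((0 : ℝ), (1 : ℝ)) q.2 :=
      (hasDerivAt_const q.2 q.1).prodMk (hasDerivAt_id q.2)
    exact HasFDerivAt.comp_hasDerivAt (x := q.2) (hf := hcurve) (hl := hFd q hq)
  have hf'C : ContDiffOn ℝ 1 (fderiv ℝ F) (Metric.ball 0 ε) :=
    hg.fderiv_of_isOpen hopen (by norm_num)
  have hf'd : HasFDerivAt (fderiv ℝ F) (fderiv ℝ (fderiv ℝ F) (x, y)) (x, y) :=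
    ((hf'C.contDiffAt hnhds).differentiableAt one_ne_zero).hasFDerivAt
  set f'' := fderiv ℝ (fderiv ℝ F) ((x, y) : ℝ × ℝ) with hf''def
  have hbx : ∀ v : ℝ × ℝ, HasDerivAt (fun t => fderiv ℝ F (t, y) v) (f'' (1, 0) v) x := by
    intro v
    have hcurve : HasDerivAt (fun t : ℝ => ((t, y) : ℝ × ℝ)) ((1 : ℝ), (0 : ℝ)) x :=
      (hasDerivAt_id x).prodMk (hasDerivAt_const x y)
    have h1 : HasDerivAt (fun t : ℝ => fderiv ℝ F (t, y)) (f'' (1, 0)) x :=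
      HasFDerivAt.comp_hasDerivAt (hf := hcurve) (hl := hf'd)
    simpa using h1.clm_apply (hasDerivAt_const x v)
  have hby : ∀ v : ℝ × ℝ, HasDerivAt (fun t => fderiv ℝ F (x, t) v) (f'' (0, 1) v) y := by
    intro v
    have hcurve : HasDerivAt (fun t : ℝ => ((x, t) : ℝ × ℝ)) ((0 : ℝ), (1 : ℝ)) y :=
      (hasDerivAt_const y x).prodMk (hasDerivAt_id y)
    have h1 : HasDerivAt (fun t : ℝ => fderiv ℝ F (x, t)) (f'' (0, 1)) y :=
      HasFDerivAt.comp_hasDerivAt (hf := hcurve) (hl := hf'd)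
    simpa using h1.clm_apply (hasDerivAt_const y v)
  have hevx : ∀ᶠ t in nhds x, ((t, y) : ℝ × ℝ) ∈ Metric.ball (0 : ℝ × ℝ) ε :=
    (continuous_id.prodMk continuous_const).continuousAt.preimage_mem_nhds hnhds
  have hevy : ∀ᶠ t in nhds y, ((x, t) : ℝ × ℝ) ∈ Metric.ball (0 : ℝ × ℝ) ε :=
    (continuous_const.prodMk continuous_id).continuousAt.preimage_mem_nhds hnhds
  have hgxx : gxxH g x y = f'' (1, 0) (1, 0) := by
    have heq : (fun t => deriv (fun s => g s y) t)
        =ᶠ[nhds x] fun t => fderiv ℝ F (t, y) (1, 0) := by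
      filter_upwards [hevx] with t ht
      exact (hax (t, y) ht).deriv
    rw [gxxH, heq.deriv_eq, (hbx (1, 0)).deriv]
  have hgyy : gyyH g x y = f'' (0, 1) (0, 1) := by
    have heq : (fun t => deriv (fun s => g x s) t)
        =ᶠ[nhds y] fun t => fderiv ℝ F (x, t) (0, 1) := by
      filter_upwards [hevy] with t ht
      exact (hay (x, t) ht).deriv
    rw [gyyH, heq.deriv_eq, (hby (0, 1)).deriv]
  have hgxy : gxyH g x y = f'' (0, 1) (1, 0) := by
    have heq : (fun t => deriv (fun s => g s t) x)
        =ᶠ[nhds y] fun t => fderiv ℝ F (x, t) (1, 0) := by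
      filter_upwards [hevy] with t ht
      exact (hax (x, t) ht).deriv
    rw [gxyH, heq.deriv_eq, (hby (1, 0)).deriv]
  have hsymm : f'' (1, 0) (0, 1) = f'' (0, 1) (1, 0) :=
    second_derivative_symmetric_of_eventually (Filter.eventually_of_mem hnhds hFd) hf'd _ _
  have hDz : ∀ q ∈ Metric.ball (0 : ℝ × ℝ) ε,
      DzH (fun s t => ((g s t : ℝ) : ℂ)) q.1 q.2
        = (1 / 2 : ℂ) * (((fderiv ℝ F q (1, 0) : ℝ) : ℂ)
            - Complex.I * ((fderiv ℝ F q (0, 1) : ℝ) : ℂ)) := by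
    intro q hq
    have d1 := ((hax q hq).ofReal_comp).deriv
    have d2 := ((hay q hq).ofReal_comp).deriv
    rw [DzH, d1, d2]
  have hd1 : deriv (fun t => DzH (fun s t => ((g s t : ℝ) : ℂ)) t y) x
      = (1 / 2 : ℂ) * (((f'' (1, 0) (1, 0) : ℝ) : ℂ)
          - Complex.I * ((f'' (1, 0) (0, 1) : ℝ) : ℂ)) := by
    have heq : (fun t => DzH (fun s t => ((g s t : ℝ) : ℂ)) t y)
        =ᶠ[nhds x] (fun t => (1 / 2 : ℂ) * (((fderiv ℝ F (t, y) (1, 0) : ℝ) : ℂ)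
            - Complex.I * ((fderiv ℝ F (t, y) (0, 1) : ℝ) : ℂ))) := by
      filter_upwards [hevx] with t ht
      exact hDz (t, y) ht
    rw [heq.deriv_eq]
    exact ((((hbx (1, 0)).ofReal_comp).sub
      (((hbx (0, 1)).ofReal_comp).const_mul Complex.I)).const_mul (1 / 2 : ℂ)).deriv
  have hd2 : deriv (fun t => DzH (fun s t => ((g s t : ℝ) : ℂ)) x t) y
      = (1 / 2 : ℂ) * (((f'' (0, 1) (1, 0) : ℝ) : ℂ)
          - Complex.I * ((f'' (0, 1) (0, 1) : ℝ) : ℂ)) := by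
    have heq : (fun t => DzH (fun s t => ((g s t : ℝ) : ℂ)) x t)
        =ᶠ[nhds y] (fun t => (1 / 2 : ℂ) * (((fderiv ℝ F (x, t) (1, 0) : ℝ) : ℂ)
            - Complex.I * ((fderiv ℝ F (x, t) (0, 1) : ℝ) : ℂ))) := by
      filter_upwards [hevy] with t ht
      exact hDz (x, t) ht
    rw [heq.deriv_eq]
    exact ((((hby (1, 0)).ofReal_comp).sub
      (((hby (0, 1)).ofReal_comp).const_mul Complex.I)).const_mul (1 / 2 : ℂ)).deriv
  have hout : DzH (DzH (fun s t => (g s t : ℂ))) x y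
      = (1 / 2 : ℂ) * (deriv (fun t => DzH (fun s t => ((g s t : ℝ) : ℂ)) t y) x
          - Complex.I * deriv (fun t => DzH (fun s t => ((g s t : ℝ) : ℂ)) x t) y) := rfl
  rw [hout, hd1, hd2, gzzH, hgxx, hgyy, hgxy, hsymm]
  push_cast
  linear_combination ((f'' (0, 1) (0, 1) : ℝ) : ℂ) / 4 * Complex.I_sq

/-- For `g` of class `C²` on a punctured neighborhood of the origin whose Hessian has an
isolated equi-diagonal point at the origin: `g_{zz} = (1/4)((g_{xx}-g_{yy}) - 2ig_{xy})`
(as the second Wirtinger derivative), and the index of the eigen-flow of the Hessian of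
`g` at the origin equals `-(1/2)·ind₀(g_{zz})`; equivalently, the winding of the field
`d_g` along a small circle is minus the winding of `g_{zz}`: for continuous angle lifts
`α` of `d_g` and `β` of `g_{zz}` along the circle, `α(2π) - α(0) = -(β(2π) - β(0))`. -/
theorem hessian_eigenflow_index_eq (g : ℝ → ℝ → ℝ) (ε : ℝ) (hε : 0 < ε)
    (hg : ContDiffOn ℝ 2 (fun p : ℝ × ℝ => g p.1 p.2) (Metric.ball 0 ε))
    (hiso : ∀ p : ℝ × ℝ, p ∈ Metric.ball (0 : ℝ × ℝ) ε → p ≠ 0 →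
      ¬(gxxH g p.1 p.2 = gyyH g p.1 p.2 ∧ gxyH g p.1 p.2 = 0)) :
    (∀ p : ℝ × ℝ, p ∈ Metric.ball (0 : ℝ × ℝ) ε → p ≠ 0 →
      DzH (DzH (fun s t => (g s t : ℂ))) p.1 p.2 = gzzH g p.1 p.2) ∧
    (∀ r : ℝ, 0 < r → r < ε → ∀ α β : ℝ → ℝ, Continuous α → Continuous β →
      (∀ t : ℝ, dgH g (r * Real.cos t) (r * Real.sin t)
        = (Real.sqrt ((dgH g (r * Real.cos t) (r * Real.sin t)).1 ^ 2
              + (dgH g (r * Real.cos t) (r * Real.sin t)).2 ^ 2) * Real.cos (α t),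
           Real.sqrt ((dgH g (r * Real.cos t) (r * Real.sin t)).1 ^ 2
              + (dgH g (r * Real.cos t) (r * Real.sin t)).2 ^ 2) * Real.sin (α t))) →
      (∀ t : ℝ, gzzH g (r * Real.cos t) (r * Real.sin t)
        = (‖gzzH g (r * Real.cos t) (r * Real.sin t)‖ : ℂ)
            * Complex.exp ((β t : ℂ) * Complex.I)) →
      α (2 * π) - α 0 = -(β (2 * π) - β 0)) := by
  constructor
  · rintro ⟨x, y⟩ hp -
    exact dzz_eq g ε hg x y hp
  · intro r hr hrε α β hαc hβc hα hβ
    apply winding_aux α β hαc hβc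
    intro t
    set x := r * Real.cos t with hxdef
    set y := r * Real.sin t with hydef
    have hx1 : |x| ≤ r := by
      rw [hxdef, abs_mul, abs_of_pos hr]
      nlinarith [Real.abs_cos_le_one t, hr.le, abs_nonneg (Real.cos t)]
    have hy1 : |y| ≤ r := by
      rw [hydef, abs_mul, abs_of_pos hr]
      nlinarith [Real.abs_sin_le_one t, hr.le, abs_nonneg (Real.sin t)]
    have hmem : ((x, y) : ℝ × ℝ) ∈ Metric.ball (0 : ℝ × ℝ) ε := by
      rw [Metric.mem_ball, Prod.dist_eq]
      simp only [Prod.fst_zero, Prod.snd_zero, Real.dist_eq, sub_zero]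
      exact max_lt (lt_of_le_of_lt hx1 hrε) (lt_of_le_of_lt hy1 hrε)
    have hne : ((x, y) : ℝ × ℝ) ≠ 0 := by
      intro h
      rw [Prod.ext_iff] at h
      simp only [Prod.fst_zero, Prod.snd_zero] at h
      obtain ⟨h1, h2⟩ := h
      have hc : Real.cos t = 0 := by
        rcases mul_eq_zero.1 (hxdef ▸ h1) with h | h
        · exact absurd h hr.ne'
        · exact h
      have hs : Real.sin t = 0 := by
        rcases mul_eq_zero.1 (hydef ▸ h2) with h | h
        · exact absurd h hr.ne'
        · exact h
      have := Real.sin_sq_add_cos_sq t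
      rw [hc, hs] at this
      norm_num at this
    have hne2 := hiso (x, y) hmem hne
    have hd := hα t
    rw [Prod.ext_iff] at hd
    simp only [dgH] at hd
    obtain ⟨h1, h2⟩ := hd
    refine angle_step (gxxH g x y - gyyH g x y) (gxyH g x y) (α t) (β t) ?_ ?_ ?_ ?_
    · rintro ⟨hA, hB⟩
      exact hne2 ⟨sub_eq_zero.1 hA, hB⟩
    · rw [show (-(gxxH g x y - gyyH g x y)) = gyyH g x y - gxxH g x y by ring]
      exact h1
    · rw [show (-(gxxH g x y - gyyH g x y)) = gyyH g x y - gxxH g x y by ring]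
      exact h2
    · exact hβ t
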